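/- Let h(z) = 1 − e^{−z²} + e^{−2z²} for z ∈ ℂ. Then the zeros of h in ℂ are exactly the points c_k e^{iπ/4} i^ℓ √(π/3) and d_k e^{iπ/4} i^ℓ √(π/3), where ℓ ∈ {0,1,2,3}, c_k = √(1+6k) for k ∈ ℕ, and d_k = √(−1+6k) for k ∈ ℕ with k ≥ 1, and all these zeros are simple. -/

import Mathlib

noncomputable section

open Complex Real

private lemma sq_eq_iff' (z a : ℂ) : z ^ 2 = a ^ 2 ↔ z = a ∨ z = -a := by
  constructor
  · intro h
    have h2 : (z - a) * (z + a) = 0 := by linear_combination h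
    rcases mul_eq_zero.1 h2 with h3 | h3
    · exact Or.inl (sub_eq_zero.mp h3)
    · exact Or.inr (eq_neg_of_add_eq_zero_left h3)
  · rintro (rfl | rfl) <;> ring

private lemma sqv (r : ℝ) (hr : 0 ≤ r) (ℓ : ℕ) :
    (((Real.sqrt r : ℝ) : ℂ) * Complex.exp (Real.pi * Complex.I / 4) * Complex.I ^ ℓ *
      ((Real.sqrt (Real.pi / 3) : ℝ) : ℂ)) ^ 2
      = (-1) ^ ℓ * Complex.I * (r : ℂ) * (Real.pi : ℂ) / 3 := by
  have h1 : (((Real.sqrt r : ℝ) : ℂ)) ^ 2 = (r : ℂ) := by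
    rw [← Complex.ofReal_pow, Real.sq_sqrt hr]
  have h2 : (Complex.exp ((Real.pi : ℂ) * Complex.I / 4)) ^ 2 = Complex.I := by
    rw [← Complex.exp_nat_mul]
    have e : ((2 : ℕ) : ℂ) * ((Real.pi : ℂ) * Complex.I / 4) = ((Real.pi / 2 : ℝ) : ℂ) * Complex.I := by
      push_cast; ring
    rw [e, Complex.exp_mul_I, ← Complex.ofReal_cos, ← Complex.ofReal_sin,
      Real.cos_pi_div_two, Real.sin_pi_div_two]
    simp
  have h3 : (Complex.I ^ ℓ) ^ 2 = (-1 : ℂ) ^ ℓ := by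
    rw [← pow_mul, mul_comm, pow_mul, Complex.I_sq]
  have h4 : (((Real.sqrt (Real.pi / 3) : ℝ) : ℂ)) ^ 2 = ((Real.pi / 3 : ℝ) : ℂ) := by
    rw [← Complex.ofReal_pow, Real.sq_sqrt (by positivity)]
  rw [mul_pow, mul_pow, mul_pow, h1, h2, h3, h4]
  push_cast
  ring

private lemma solve (z : ℂ) (r : ℝ) (hr : 0 ≤ r) (e : ℕ) (he : e < 4)
    (hz : z ^ 2 = (-1) ^ e * Complex.I * (r : ℂ) * (Real.pi : ℂ) / 3) :
    ∃ ℓ : Fin 4, z = ((Real.sqrt r : ℝ) : ℂ) * Complex.exp (Real.pi * Complex.I / 4)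
      * Complex.I ^ (ℓ : ℕ) * ((Real.sqrt (Real.pi / 3) : ℝ) : ℂ) := by
  have h := (sq_eq_iff' z _).1 (hz.trans (sqv r hr e).symm)
  rcases h with h | h
  · exact ⟨⟨e, he⟩, h⟩
  · refine ⟨⟨(e + 2) % 4, Nat.mod_lt _ (by norm_num)⟩, ?_⟩
    have hI : Complex.I ^ ((e + 2) % 4) = - Complex.I ^ e := by
      have : Complex.I ^ ((e + 2) % 4) = Complex.I ^ (e + 2) := by
        conv_rhs => rw [← Nat.mod_add_div (e + 2) 4]
        rw [pow_add, pow_mul, Complex.I_pow_four, one_pow, mul_one]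
      rw [this, pow_add, Complex.I_sq, mul_neg_one]
    show z = _
    rw [hI, h]
    ring

private lemma key (z : ℂ) :
    1 - Complex.exp (-z ^ 2) + Complex.exp (-2 * z ^ 2) = 0 ↔
      ∃ n : ℤ, (-z ^ 2 = (Real.pi : ℂ) * Complex.I / 3 + n * (2 * Real.pi * Complex.I)) ∨
        (-z ^ 2 = -((Real.pi : ℂ) * Complex.I / 3) + n * (2 * Real.pi * Complex.I)) := by
  set a := Complex.exp ((Real.pi : ℂ) * Complex.I / 3) with ha
  set b := Complex.exp (-((Real.pi : ℂ) * Complex.I / 3)) with hb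
  have hab : a * b = 1 := by
    rw [ha, hb, ← Complex.exp_add]
    simp
  have hsum : a + b = 1 := by
    have e1 : ((Real.pi : ℂ) * Complex.I / 3) = ((Real.pi / 3 : ℝ) : ℂ) * Complex.I := by
      push_cast; ring
    rw [ha, hb, e1,
      show (-(((Real.pi / 3 : ℝ) : ℂ) * Complex.I)) = ((-(Real.pi / 3) : ℝ) : ℂ) * Complex.I by
        push_cast; ring,
      Complex.exp_mul_I, Complex.exp_mul_I,
      ← Complex.ofReal_cos, ← Complex.ofReal_sin, ← Complex.ofReal_cos, ← Complex.ofReal_sin,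
      Real.cos_neg, Real.sin_neg, Real.cos_pi_div_three]
    push_cast
    ring
  have hw2 : Complex.exp (-2 * z ^ 2) = Complex.exp (-z ^ 2) ^ 2 := by
    rw [show (-2 * z ^ 2 : ℂ) = ((2 : ℕ) : ℂ) * (-z ^ 2) by push_cast; ring,
      Complex.exp_nat_mul]
  rw [hw2]
  set w := Complex.exp (-z ^ 2) with hwdef
  have hfac : 1 - w + w ^ 2 = (w - a) * (w - b) := by
    linear_combination (-1 : ℂ) * hab + w * hsum
  rw [hfac, mul_eq_zero, sub_eq_zero, sub_eq_zero, hwdef, ha, hb,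
    Complex.exp_eq_exp_iff_exists_int, Complex.exp_eq_exp_iff_exists_int, ← exists_or]

theorem zeros_exponential_polynomial :
    (∀ z : ℂ,
      (1 - Complex.exp (-z ^ 2) + Complex.exp (-2 * z ^ 2) = 0 ↔
        ∃ ℓ : Fin 4,
          (∃ k : ℕ, z = (Real.sqrt (1 + 6 * (k : ℝ)) : ℝ)
              * Complex.exp (Real.pi * Complex.I / 4) * Complex.I ^ (ℓ : ℕ)
              * (Real.sqrt (Real.pi / 3) : ℝ)) ∨
          (∃ k : ℕ, 1 ≤ k ∧ z = (Real.sqrt (-1 + 6 * (k : ℝ)) : ℝ)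
              * Complex.exp (Real.pi * Complex.I / 4) * Complex.I ^ (ℓ : ℕ)
              * (Real.sqrt (Real.pi / 3) : ℝ)))) ∧
    ∀ z : ℂ, 1 - Complex.exp (-z ^ 2) + Complex.exp (-2 * z ^ 2) = 0 →
      deriv (fun w : ℂ => 1 - Complex.exp (-w ^ 2) + Complex.exp (-2 * w ^ 2)) z ≠ 0 := by
  constructor
  · intro z
    rw [key z]
    constructor
    · rintro ⟨n, hn | hn⟩
      · -- -z^2 = πI/3 + n·2πI, so z^2 = Iπ(-6n-1)/3
        rcases le_or_gt 0 n with h0 | h0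
        · -- n ≥ 0 : z^2 = -I(6n+1)π/3, e = 1, r = 1+6k, k = n.toNat
          set k : ℕ := n.toNat with hk
          have hkn : (k : ℝ) = (n : ℝ) := by
            rw [hk]; exact_mod_cast congrArg (fun m : ℤ => (m : ℝ)) (Int.toNat_of_nonneg h0)
          have hz2 : z ^ 2 = (-1) ^ 1 * Complex.I * ((1 + 6 * (k : ℝ) : ℝ) : ℂ)
              * (Real.pi : ℂ) / 3 := by
            push_cast [hkn]
            linear_combination (-1 : ℂ) * hn
          obtain ⟨ℓ, hℓ⟩ := solve z (1 + 6 * (k : ℝ)) (by positivity) 1 (by norm_num) hz2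
          exact ⟨ℓ, Or.inl ⟨k, hℓ⟩⟩
        · -- n < 0 : z^2 = I(6k-1)π/3 with k = (-n).toNat ≥ 1, e = 0
          set k : ℕ := (-n).toNat with hk
          have hk1 : 1 ≤ k := by omega
          have hkn : (k : ℝ) = -(n : ℝ) := by
            have := Int.toNat_of_nonneg (by omega : (0 : ℤ) ≤ -n)
            rw [hk]; exact_mod_cast congrArg (fun m : ℤ => (m : ℝ)) this
          have hz2 : z ^ 2 = (-1) ^ 0 * Complex.I * ((-1 + 6 * (k : ℝ) : ℝ) : ℂ)
              * (Real.pi : ℂ) / 3 := by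
            push_cast [hkn]
            linear_combination (-1 : ℂ) * hn
          have hr : (0 : ℝ) ≤ -1 + 6 * (k : ℝ) := by
            have : (1 : ℝ) ≤ (k : ℝ) := by exact_mod_cast hk1
            linarith
          obtain ⟨ℓ, hℓ⟩ := solve z (-1 + 6 * (k : ℝ)) hr 0 (by norm_num) hz2
          exact ⟨ℓ, Or.inr ⟨k, hk1, hℓ⟩⟩
      · -- -z^2 = -πI/3 + n·2πI, so z^2 = Iπ(1-6n)/3
        rcases le_or_gt n 0 with h0 | h0
        · -- n ≤ 0 : z^2 = I(6k+1)π/3 with k = (-n).toNat, e = 0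
          set k : ℕ := (-n).toNat with hk
          have hkn : (k : ℝ) = -(n : ℝ) := by
            have := Int.toNat_of_nonneg (by omega : (0 : ℤ) ≤ -n)
            rw [hk]; exact_mod_cast congrArg (fun m : ℤ => (m : ℝ)) this
          have hz2 : z ^ 2 = (-1) ^ 0 * Complex.I * ((1 + 6 * (k : ℝ) : ℝ) : ℂ)
              * (Real.pi : ℂ) / 3 := by
            push_cast [hkn]
            linear_combination (-1 : ℂ) * hn
          obtain ⟨ℓ, hℓ⟩ := solve z (1 + 6 * (k : ℝ)) (by positivity) 0 (by norm_num) hz2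
          exact ⟨ℓ, Or.inl ⟨k, hℓ⟩⟩
        · -- n ≥ 1 : z^2 = -I(6k-1)π/3 with k = n.toNat ≥ 1, e = 1
          set k : ℕ := n.toNat with hk
          have hk1 : 1 ≤ k := by omega
          have hkn : (k : ℝ) = (n : ℝ) := by
            rw [hk]; exact_mod_cast congrArg (fun m : ℤ => (m : ℝ)) (Int.toNat_of_nonneg h0.le)
          have hz2 : z ^ 2 = (-1) ^ 1 * Complex.I * ((-1 + 6 * (k : ℝ) : ℝ) : ℂ)
              * (Real.pi : ℂ) / 3 := by
            push_cast [hkn]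
            linear_combination (-1 : ℂ) * hn
          have hr : (0 : ℝ) ≤ -1 + 6 * (k : ℝ) := by
            have : (1 : ℝ) ≤ (k : ℝ) := by exact_mod_cast hk1
            linarith
          obtain ⟨ℓ, hℓ⟩ := solve z (-1 + 6 * (k : ℝ)) hr 1 (by norm_num) hz2
          exact ⟨ℓ, Or.inr ⟨k, hk1, hℓ⟩⟩
    · rintro ⟨ℓ, ⟨k, rfl⟩ | ⟨k, hk1, rfl⟩⟩
      · have hsq := sqv (1 + 6 * (k : ℝ)) (by positivity) (ℓ : ℕ)
        rcases Nat.even_or_odd (ℓ : ℕ) with he | he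
        · rw [he.neg_one_pow] at hsq
          refine ⟨-(k : ℤ), Or.inr ?_⟩
          push_cast at hsq ⊢
          linear_combination (-1 : ℂ) * hsq
        · rw [he.neg_one_pow] at hsq
          refine ⟨(k : ℤ), Or.inl ?_⟩
          push_cast at hsq ⊢
          linear_combination (-1 : ℂ) * hsq
      · have hr : (0 : ℝ) ≤ -1 + 6 * (k : ℝ) := by
          have : (1 : ℝ) ≤ (k : ℝ) := by exact_mod_cast hk1
          linarith
        have hsq := sqv (-1 + 6 * (k : ℝ)) hr (ℓ : ℕ)
        rcases Nat.even_or_odd (ℓ : ℕ) with he | he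
        · rw [he.neg_one_pow] at hsq
          refine ⟨-(k : ℤ), Or.inl ?_⟩
          push_cast at hsq ⊢
          linear_combination (-1 : ℂ) * hsq
        · rw [he.neg_one_pow] at hsq
          refine ⟨(k : ℤ), Or.inr ?_⟩
          push_cast at hsq ⊢
          linear_combination (-1 : ℂ) * hsq
  · intro z hz
    have hw2 : Complex.exp (-2 * z ^ 2) = Complex.exp (-z ^ 2) ^ 2 := by
      rw [show (-2 * z ^ 2 : ℂ) = ((2 : ℕ) : ℂ) * (-z ^ 2) by push_cast; ring,
        Complex.exp_nat_mul]
    have d1 : HasDerivAt (fun u : ℂ => -u ^ 2) (-(2 * z)) z := by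
      have := (hasDerivAt_pow 2 z).neg
      refine this.congr_deriv ?_
      push_cast; ring
    have d2 : HasDerivAt (fun u : ℂ => -2 * u ^ 2) (-(4 * z)) z := by
      have := (hasDerivAt_pow 2 z).const_mul (-2 : ℂ)
      refine this.congr_deriv ?_
      push_cast; ring
    have D : HasDerivAt (fun w : ℂ => 1 - Complex.exp (-w ^ 2) + Complex.exp (-2 * w ^ 2))
        (0 - Complex.exp (-z ^ 2) * (-(2 * z)) + Complex.exp (-2 * z ^ 2) * (-(4 * z))) z :=
      ((hasDerivAt_const z (1 : ℂ)).sub d1.cexp).add d2.cexp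
    rw [D.deriv]
    intro hder
    have hzne : z ≠ 0 := by
      rintro rfl
      norm_num at hz
    set w := Complex.exp (-z ^ 2) with hwdef
    rw [hw2] at hz hder
    -- hder : 0 - w * -(2z) + w^2 * -(4z) = 0, i.e. 2 z w (1 - 2w) = 0
    have hfac : 2 * z * w * (1 - 2 * w) = 0 := by linear_combination hder
    have hwne : w ≠ 0 := Complex.exp_ne_zero _
    rcases mul_eq_zero.1 hfac with h | h
    · rcases mul_eq_zero.1 h with h | h
      · rcases mul_eq_zero.1 h with h | h
        · norm_num at h
        · exact hzne h
      · exact hwne h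
    · have h34 : (3 : ℂ) / 4 = 0 := by
        linear_combination hz - ((1 - 2 * w) / 4) * h
      norm_num at h34
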